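/- arXiv:2007.09410 — 6 statements merged into one kernel-verified Lean document; each statement's English description precedes it below -/
import Mathlib

section
/- Let I be a finite nonempty index set and let λ : I → ℝ be strictly positive. For every x : I → ℝ with x_i > 0 for all i and Σ_{i∈I} x_i = 1, it holds that Σ_{i∈I} λ_i / x_i² ≥ ( Σ_{i∈I} λ_i^{1/3} )³, and equality holds if and only if x_i = λ_i^{1/3} / Σ_{j∈I} λ_j^{1/3} for every i ∈ I. -/
open Finset

lemma amgm3_aux {u v : ℝ} (hu : 0 < u) (hv : 0 < v) :
    0 ≤ u ^ 3 / v ^ 2 - (3 * u - 2 * v) ∧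
    (u ^ 3 / v ^ 2 - (3 * u - 2 * v) = 0 ↔ u = v) := by
  have h : u ^ 3 / v ^ 2 - (3 * u - 2 * v) = (u - v) ^ 2 * (u + 2 * v) / v ^ 2 := by
    field_simp; ring
  refine ⟨by rw [h]; positivity, ?_⟩
  rw [h, div_eq_zero_iff]
  constructor
  · rintro (h1 | h1)
    · rcases mul_eq_zero.1 h1 with h2 | h2
      · have : u - v = 0 := by nlinarith [sq_nonneg (u - v)]
        linarith
      · linarith
    · nlinarith
  · intro h1; left; rw [h1]; ring

/-- For positive `λ` and positive fractions `x` summing to `1`,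
`∑ λᵢ / xᵢ² ≥ (∑ λᵢ^{1/3})³`, with equality iff `xᵢ = λᵢ^{1/3} / ∑ λⱼ^{1/3}`. -/
theorem stmt3 {I : Type*} [Fintype I] [Nonempty I]
    (lam : I → ℝ) (hlam : ∀ i, 0 < lam i)
    (x : I → ℝ) (hx : ∀ i, 0 < x i) (hsum : ∑ i, x i = 1) :
    ((∑ i, lam i ^ ((1 : ℝ) / 3)) ^ 3 ≤ ∑ i, lam i / x i ^ 2) ∧
    ((∑ i, lam i / x i ^ 2 = (∑ i, lam i ^ ((1 : ℝ) / 3)) ^ 3) ↔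
      ∀ i, x i = lam i ^ ((1 : ℝ) / 3) / ∑ j, lam j ^ ((1 : ℝ) / 3)) := by
  set u : I → ℝ := fun i => lam i ^ ((1 : ℝ) / 3) with hudef
  have hu : ∀ i, 0 < u i := fun i => Real.rpow_pos_of_pos (hlam i) _
  have hu3 : ∀ i, (u i) ^ 3 = lam i := by
    intro i
    rw [hudef]
    rw [← Real.rpow_natCast (lam i ^ ((1 : ℝ) / 3)) 3, ← Real.rpow_mul (hlam i).le]
    norm_num
  set c : ℝ := ∑ i, u i with hc
  have hcpos : 0 < c := Finset.sum_pos (fun i _ => hu i) Finset.univ_nonempty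
  set D : I → ℝ := fun i => lam i / x i ^ 2 - c ^ 2 * (3 * u i - 2 * (c * x i)) with hDdef
  have hD : ∀ i, 0 ≤ D i ∧ (D i = 0 ↔ u i = c * x i) := by
    intro i
    obtain ⟨ha, hb⟩ := amgm3_aux (hu i) (mul_pos hcpos (hx i))
    have hrw : D i = c ^ 2 * ((u i) ^ 3 / (c * x i) ^ 2 - (3 * u i - 2 * (c * x i))) := by
      rw [hDdef]
      have hc0 : c ≠ 0 := hcpos.ne'
      have : lam i / x i ^ 2 = c ^ 2 * ((u i) ^ 3 / (c * x i) ^ 2) := by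
        rw [← hu3 i, mul_pow]
        rw [mul_div_assoc', mul_div_mul_left _ _ (pow_ne_zero 2 hc0)]
      simp only [this]; ring
    constructor
    · rw [hrw]; positivity
    · rw [hrw, mul_eq_zero]
      constructor
      · rintro (h1 | h1)
        · nlinarith
        · exact hb.1 h1
      · intro h1; right; exact hb.2 h1
  have hsumD : ∑ i, D i = (∑ i, lam i / x i ^ 2) - c ^ 3 := by
    have h1 : ∑ i, (3 * u i - 2 * (c * x i)) = c := by
      rw [Finset.sum_sub_distrib, ← Finset.mul_sum, ← Finset.mul_sum, ← Finset.mul_sum,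
        hsum, ← hc]
      ring
    have h2 : ∑ i, c ^ 2 * (3 * u i - 2 * (c * x i)) = c ^ 3 := by
      rw [← Finset.mul_sum, h1]; ring
    rw [hDdef]
    rw [Finset.sum_sub_distrib, h2]
  constructor
  · have h0 : 0 ≤ ∑ i, D i := Finset.sum_nonneg fun i _ => (hD i).1
    linarith [hsumD ▸ h0]
  · have hzero : (∑ i, D i = 0) ↔ ∀ i, x i = u i / c := by
      rw [Finset.sum_eq_zero_iff_of_nonneg (fun i _ => (hD i).1)]
      constructor
      · intro h i
        have := (hD i).2.1 (h i (Finset.mem_univ i))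
        field_simp
        linarith [this]
      · intro h i _
        refine (hD i).2.2 ?_
        rw [h i]; field_simp
    constructor
    · intro h
      have : ∑ i, D i = 0 := by rw [hsumD, h]; ring
      exact hzero.1 this
    · intro h
      have h0 : ∑ i, D i = 0 := hzero.2 h
      rw [hsumD] at h0; linarith
end

section
/- Let I be a finite nonempty index set, λ : I → ℝ strictly positive, and let W > 0 and φ > 0. Over all liquidity allocations ω : I → ℝ with ω_i > 0 and Σ_{i∈I} ω_i = W, the quantity Σ_{i∈I} 8φλ_i/ω_i² attains its minimum value (8φ/W²)·( Σ_{i∈I} λ_i^{1/3} )³, and the minimum is attained exactly at ω_i = W·λ_i^{1/3} / Σ_{j∈I} λ_j^{1/3}. -/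
open Finset

/-- Tangent line trick for `t ↦ c/t²` at `t = a`, with equality case. -/
lemma aux2 (c a t : ℝ) (hc : 0 < c) (ha : 0 < a) (ht : 0 < t) :
    c / a ^ 2 - 2 * c / a ^ 3 * (t - a) ≤ c / t ^ 2 ∧
    (c / t ^ 2 = c / a ^ 2 - 2 * c / a ^ 3 * (t - a) ↔ t = a) := by
  have key : c / t ^ 2 - (c / a ^ 2 - 2 * c / a ^ 3 * (t - a))
      = c * ((a - t) ^ 2 * (a + 2 * t)) / (a ^ 3 * t ^ 2) := by
    field_simp
    ring
  have hpos : (0:ℝ) < a ^ 3 * t ^ 2 := by positivity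
  refine ⟨?_, ?_, ?_⟩
  · have h1 : (0:ℝ) ≤ c * ((a - t) ^ 2 * (a + 2 * t)) / (a ^ 3 * t ^ 2) := by positivity
    linarith
  · intro h
    have h0 : c * ((a - t) ^ 2 * (a + 2 * t)) / (a ^ 3 * t ^ 2) = 0 := by linarith
    have h2 : c * ((a - t) ^ 2 * (a + 2 * t)) = 0 := by
      rcases div_eq_zero_iff.mp h0 with h | h
      · exact h
      · exact absurd h hpos.ne'
    have h3 : (a - t) ^ 2 * (a + 2 * t) = 0 := by
      rcases mul_eq_zero.mp h2 with h | h
      · exact absurd h hc.ne'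
      · exact h
    have h4 : a + 2 * t > 0 := by linarith
    rcases mul_eq_zero.mp h3 with h | h
    · have : a - t = 0 := by
        exact pow_eq_zero_iff (by norm_num) |>.mp h
      linarith
    · exact absurd h h4.ne'
  · rintro rfl
    ring

/-- Optimal liquidity allocation: over positive allocations `ω` summing to `W`, the total
record-fee rate `∑ 8φλᵢ/ωᵢ²` attains the minimum value `(8φ/W²)(∑ λᵢ^{1/3})³`, exactly at
`ωᵢ = W λᵢ^{1/3} / ∑ λⱼ^{1/3}`. -/
theorem stmt4 {I : Type*} [Fintype I] [Nonempty I]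
    (lam : I → ℝ) (hlam : ∀ i, 0 < lam i)
    (W φ : ℝ) (hW : 0 < W) (hφ : 0 < φ) :
    IsLeast { c : ℝ | ∃ ω : I → ℝ, (∀ i, 0 < ω i) ∧ (∑ i, ω i = W) ∧
        c = ∑ i, 8 * φ * lam i / ω i ^ 2 }
      (8 * φ / W ^ 2 * (∑ i, lam i ^ ((1 : ℝ) / 3)) ^ 3) ∧
    ∀ ω : I → ℝ, (∀ i, 0 < ω i) → (∑ i, ω i = W) →
      ((∑ i, 8 * φ * lam i / ω i ^ 2
          = 8 * φ / W ^ 2 * (∑ i, lam i ^ ((1 : ℝ) / 3)) ^ 3) ↔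
        ∀ i, ω i = W * lam i ^ ((1 : ℝ) / 3) / ∑ j, lam j ^ ((1 : ℝ) / 3)) := by
  have hμpos : ∀ i, 0 < lam i ^ ((1:ℝ)/3) := fun i => Real.rpow_pos_of_pos (hlam i) _
  set S : ℝ := ∑ i, lam i ^ ((1:ℝ)/3) with hSdef
  have hS : 0 < S := Finset.sum_pos (fun i _ => hμpos i) Finset.univ_nonempty
  set M : ℝ := 8 * φ / W ^ 2 * S ^ 3 with hMdef
  set a : I → ℝ := fun i => W * lam i ^ ((1:ℝ)/3) / S with hadef
  have hapos : ∀ i, 0 < a i := fun i => div_pos (mul_pos hW (hμpos i)) hS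
  have hμ3 : ∀ i, (lam i ^ ((1:ℝ)/3)) ^ 3 = lam i := fun i => by
    rw [← Real.rpow_natCast (lam i ^ ((1:ℝ)/3)) 3, ← Real.rpow_mul (hlam i).le]
    norm_num
  have hasum : ∑ i, a i = W := by
    simp only [hadef]
    rw [← Finset.sum_div, ← Finset.mul_sum, ← hSdef]
    field_simp
  have key1 : ∀ mu : ℝ, 0 < mu →
      8 * φ * mu ^ 3 / (W * mu / S) ^ 2 = 8 * φ / W ^ 2 * S ^ 2 * mu := by
    intro mu hmu
    field_simp
  have key2 : ∀ mu : ℝ, 0 < mu →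
      2 * (8 * φ * mu ^ 3) / (W * mu / S) ^ 3 = 16 * φ * S ^ 3 / W ^ 3 := by
    intro mu hmu
    field_simp
    ring
  have hFa : ∀ i, 8 * φ * lam i / a i ^ 2 = 8 * φ / W ^ 2 * S ^ 2 * lam i ^ ((1:ℝ)/3) := by
    intro i
    have h := key1 (lam i ^ ((1:ℝ)/3)) (hμpos i)
    rw [hμ3 i] at h
    simpa only [hadef] using h
  have hconst : ∀ i, 2 * (8 * φ * lam i) / a i ^ 3 = 16 * φ * S ^ 3 / W ^ 3 := by
    intro i
    have h := key2 (lam i ^ ((1:ℝ)/3)) (hμpos i)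
    rw [hμ3 i] at h
    simpa only [hadef] using h
  have hFasum : ∑ i, 8 * φ * lam i / a i ^ 2 = M := by
    rw [Finset.sum_congr rfl (fun i _ => hFa i), ← Finset.mul_sum, ← hSdef, hMdef]
    ring
  -- the lower (tangent) bound and its sum
  have hlowsum : ∀ ω : I → ℝ, (∑ i, ω i = W) →
      ∑ i, (8 * φ * lam i / a i ^ 2 - 2 * (8 * φ * lam i) / a i ^ 3 * (ω i - a i)) = M := by
    intro ω hωsum
    rw [Finset.sum_sub_distrib, hFasum]
    have : ∑ i, 2 * (8 * φ * lam i) / a i ^ 3 * (ω i - a i)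
        = 16 * φ * S ^ 3 / W ^ 3 * ∑ i, (ω i - a i) := by
      rw [Finset.mul_sum]
      exact Finset.sum_congr rfl fun i _ => by rw [hconst i]
    rw [this, Finset.sum_sub_distrib, hωsum, hasum]
    ring
  have hle : ∀ (ω : I → ℝ), (∀ i, 0 < ω i) → ∀ i,
      8 * φ * lam i / a i ^ 2 - 2 * (8 * φ * lam i) / a i ^ 3 * (ω i - a i)
        ≤ 8 * φ * lam i / ω i ^ 2 := by
    intro ω hω i
    exact (aux2 (8 * φ * lam i) (a i) (ω i) (mul_pos (mul_pos (by norm_num : (0:ℝ) < 8) hφ) (hlam i)) (hapos i) (hω i)).1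
  constructor
  · constructor
    · exact ⟨a, hapos, hasum, hFasum.symm⟩
    · rintro c ⟨ω, hω, hωsum, rfl⟩
      calc M = ∑ i, (8 * φ * lam i / a i ^ 2 - 2 * (8 * φ * lam i) / a i ^ 3 * (ω i - a i)) :=
            (hlowsum ω hωsum).symm
        _ ≤ ∑ i, 8 * φ * lam i / ω i ^ 2 := Finset.sum_le_sum fun i _ => hle ω hω i
  · intro ω hω hωsum
    constructor
    · intro h
      intro i
      have hsum0 : ∑ i, (8 * φ * lam i / ω i ^ 2
          - (8 * φ * lam i / a i ^ 2 - 2 * (8 * φ * lam i) / a i ^ 3 * (ω i - a i))) = 0 := by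
        rw [Finset.sum_sub_distrib, h, hlowsum ω hωsum]
        ring
      have hterm := (Finset.sum_eq_zero_iff_of_nonneg
        (fun i _ => sub_nonneg.mpr (hle ω hω i))).mp hsum0 i (Finset.mem_univ i)
      have heq : 8 * φ * lam i / ω i ^ 2
          = 8 * φ * lam i / a i ^ 2 - 2 * (8 * φ * lam i) / a i ^ 3 * (ω i - a i) := by
        linarith [hterm]
      exact (aux2 (8 * φ * lam i) (a i) (ω i) (mul_pos (mul_pos (by norm_num : (0:ℝ) < 8) hφ) (hlam i)) (hapos i) (hω i)).2.mp heq
    · intro h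
      have : ∑ i, 8 * φ * lam i / ω i ^ 2 = ∑ i, 8 * φ * lam i / a i ^ 2 :=
        Finset.sum_congr rfl fun i _ => by rw [h i]
      rw [this, hFasum]
end

section
/- Let V be a finite set and let T₁ and T₂ be two trees on the same vertex set V. Then there exists a bijection ψ from the edge set of T₁ to the edge set of T₂ such that for every edge e = {u, v} of T₁, the edge ψ(e) lies on the unique path in T₂ between u and v. -/
open SimpleGraph Finset Submodule Module

section Aux
variable {V : Type*}

private def chi [DecidableEq V] (x : V) : V → ZMod 2 := fun w => if w = x then 1 else 0

private def evec [DecidableEq V] (e : Sym2 V) : V → ZMod 2 := fun w => if w ∈ e then 1 else 0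

private lemma evec_mk [DecidableEq V] {a b : V} (h : a ≠ b) :
    evec s(a, b) = chi a + chi b := by
  funext w
  simp only [evec, chi, Sym2.mem_iff, Pi.add_apply]
  rcases eq_or_ne w a with rfl | h1
  · rw [if_pos (Or.inl rfl), if_pos rfl, if_neg h, add_zero]
  · rcases eq_or_ne w b with rfl | h2
    · simp [h1]
    · simp [h1, h2]

private lemma chi_self [DecidableEq V] (u : V) : chi u + chi u = 0 := by
  funext w
  show chi u w + chi u w = 0
  simp only [chi]
  split <;> decide

private lemma walk_sum [DecidableEq V] {G : SimpleGraph V} {u v : V} (p : G.Walk u v) :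
    (p.edges.map evec).sum = chi u + chi v := by
  induction p with
  | nil => rename_i x; simpa using (chi_self x).symm
  | cons h q ih =>
    rename_i a b c
    simp only [Walk.edges_cons, List.map_cons, List.sum_cons, ih, evec_mk h.ne]
    have : chi a + chi b + (chi b + chi c) = chi a + (chi b + chi b) + chi c := by abel
    rw [this, chi_self, add_zero]

private lemma path_sum [DecidableEq V] {G : SimpleGraph V} {u v : V} {p : G.Walk u v}
    (hp : p.IsPath) : ∑ f ∈ p.edges.toFinset, evec f = chi u + chi v := by
  rw [List.sum_toFinset _ hp.isTrail.edges_nodup, walk_sum]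

private lemma eq_getVert_one_of_mem_edges {G : SimpleGraph V} {u v w : V} (p : G.Walk u v)
    (hp : p.IsPath) (hw : s(u, w) ∈ p.edges) : w = p.getVert 1 := by
  cases p with
  | nil => simp at hw
  | cons h q =>
    rw [Walk.cons_isPath_iff] at hp
    simp only [Walk.edges_cons, List.mem_cons] at hw
    rcases hw with hw | hw
    · rw [Sym2.eq_iff] at hw
      rcases hw with ⟨-, rfl⟩ | ⟨h1, rfl⟩
      · simp [Walk.getVert_cons_succ]
      · exact absurd h1 h.ne
    · exact absurd (Walk.fst_mem_support_of_mem_edges q hw) hp.2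

private lemma exists_degree_one [Fintype V] [DecidableEq V] (G : SimpleGraph V)
    [DecidableRel G.Adj] (hG : G.IsAcyclic) {a b : V} (hab : G.Adj a b) :
    ∃ w, G.degree w = 1 := by
  classical
  have hN : Nonempty V := ⟨a⟩
  set P : ℕ → Prop := fun n => ∃ (u v : V) (p : G.Walk u v), p.IsPath ∧ p.length = n with hPdef
  have hP1 : P 1 := by
    refine ⟨a, b, Walk.cons hab Walk.nil, ?_, rfl⟩
    simp [Walk.cons_isPath_iff, hab.ne]
  have hbd : ∀ n, P n → n ≤ Fintype.card V := by
    rintro n ⟨u, v, p, hp, rfl⟩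
    exact hp.length_lt.le
  have hcard : 1 ≤ Fintype.card V := Fintype.card_pos
  have hspec : P (Nat.findGreatest P (Fintype.card V)) :=
    Nat.findGreatest_spec hcard hP1
  obtain ⟨u, v, p, hp, hlen⟩ := hspec
  have hmax : ∀ (x y : V) (q : G.Walk x y), q.IsPath → q.length ≤ p.length := by
    intro x y q hq
    rw [hlen]
    exact Nat.le_findGreatest (hbd _ ⟨x, y, q, hq, rfl⟩) ⟨x, y, q, hq, rfl⟩
  have hlen1 : 1 ≤ p.length := by
    rw [hlen]; exact Nat.le_findGreatest hcard hP1
  have hnil : ¬ p.Nil := by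
    rw [Walk.nil_iff_length_eq]; omega
  have hadj1 : G.Adj u (p.getVert 1) := Walk.adj_snd hnil
  have huniq : ∀ w, G.Adj u w → w = p.getVert 1 := by
    intro w hw
    by_contra hne
    by_cases hmem : w ∈ p.support
    · have hq : (p.takeUntil w hmem).IsPath := hp.takeUntil hmem
      have hne' : s(u, w) ∉ ((p.takeUntil w hmem).reverse).edges := by
        rw [Walk.edges_reverse, List.mem_reverse]
        intro hmem'
        have h2 : s(u, w) ∈ p.edges := Walk.edges_takeUntil_subset _ hmem hmem'
        exact hne (eq_getVert_one_of_mem_edges p hp h2)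
      have hc := Path.cons_isCycle ⟨(p.takeUntil w hmem).reverse, hq.reverse⟩ hw hne'
      exact hG _ hc
    · have hpath : (Walk.cons hw.symm p).IsPath := hp.cons hmem
      have := hmax _ _ _ hpath
      simp [Walk.length_cons] at this
  have hnb : G.neighborFinset u = {p.getVert 1} := by
    ext x
    simp only [mem_neighborFinset, Finset.mem_singleton]
    exact ⟨huniq x, fun h => h ▸ hadj1⟩
  exact ⟨u, by rw [← card_neighborFinset_eq_degree, hnb, Finset.card_singleton]⟩

end Aux

/-- Adolphson–Hu edge-exchange property: for any two trees `T₁`, `T₂` on the same finite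
vertex set there is a bijection `ψ` of edge sets such that each edge `{u,v}` of `T₁` is
mapped to an edge of `T₂` lying on the unique path in `T₂` between `u` and `v`. -/
theorem stmt7 {V : Type*} [Fintype V] (T₁ T₂ : SimpleGraph V)
    (h1 : T₁.IsTree) (h2 : T₂.IsTree) :
    ∃ ψ : T₁.edgeSet ≃ T₂.edgeSet,
      ∀ (u v : V) (h : T₁.Adj u v),
        ∀ p : T₂.Walk u v, p.IsPath →
          (ψ ⟨s(u, v), T₁.mem_edgeSet.mpr h⟩ : Sym2 V) ∈ p.edges := by
  classical
  -- endpoints of each edge of T₁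
  have hex : ∀ e : T₁.edgeSet, ∃ u v : V, T₁.Adj u v ∧ (e : Sym2 V) = s(u, v) := by
    rintro ⟨e, he⟩
    induction e using Sym2.ind with
    | _ x y => exact ⟨x, y, T₁.mem_edgeSet.mp he, rfl⟩
  choose U W hUW hEq using hex
  -- a path in T₂ for each edge of T₁
  have hpath : ∀ e : T₁.edgeSet, ∃ p : T₂.Walk (U e) (W e), p.IsPath :=
    fun e => (h2.existsUnique_path (U e) (W e)).exists
  choose pa hpa using hpath
  set t : T₁.edgeSet → Finset (Sym2 V) := fun e => (pa e).edges.toFinset with ht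
  -- Hall condition
  have hall : ∀ A : Finset T₁.edgeSet, A.card ≤ (A.biUnion t).card := by
    intro A
    set F := A.biUnion t with hF
    -- linear independence of the incidence vectors of edges in A
    have hli : LinearIndependent (ZMod 2) (fun e : A => evec ((e : T₁.edgeSet) : Sym2 V)) := by
      rw [Fintype.linearIndependent_iff]
      intro g hg i
      by_contra hgi
      set S' : Finset (Sym2 V) :=
        (Finset.univ.filter (fun a : A => g a ≠ 0)).image
          (fun a : A => ((a : T₁.edgeSet) : Sym2 V)) with hS'
      have hinj2 : Function.Injective (fun a : A => ((a : T₁.edgeSet) : Sym2 V)) := by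
        intro x y hxy
        exact Subtype.ext (Subtype.ext hxy)
      have hS'sub : ∀ f ∈ S', f ∈ T₁.edgeSet := by
        intro f hf
        rw [hS'] at hf
        obtain ⟨a, _, rfl⟩ := Finset.mem_image.mp hf
        exact (a : T₁.edgeSet).2
      have hsum : ∑ f ∈ S', evec f = 0 := by
        rw [hS', Finset.sum_image (fun x _ y _ h => hinj2 h)]
        rw [← hg]
        rw [Finset.sum_filter]
        apply Finset.sum_congr rfl
        intro a _
        have hca : ∀ c : ZMod 2, c = 0 ∨ c = 1 := by decide
        rcases hca (g a) with hc | hc <;> simp [hc]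
      -- the graph on S'
      set H : SimpleGraph V := SimpleGraph.fromEdgeSet ↑S' with hH
      have hle : H ≤ T₁ := by
        rw [hH, ← SimpleGraph.fromEdgeSet_edgeSet T₁]
        exact SimpleGraph.fromEdgeSet_mono (fun f hf => hS'sub f hf)
      have hac : H.IsAcyclic := fun v c hc =>
        h1.2 (c.mapLe hle) ((Walk.mapLe_isCycle hle).mpr hc)
      -- H has an edge
      have hiS : ((i : T₁.edgeSet) : Sym2 V) ∈ S' := by
        rw [hS']
        exact Finset.mem_image_of_mem _ (Finset.mem_filter.mpr ⟨Finset.mem_univ _, hgi⟩)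
      have hadj : H.Adj (U i) (W i) := by
        rw [hH, SimpleGraph.fromEdgeSet_adj]
        exact ⟨by rw [← hEq i]; exact hiS, (hUW i).ne⟩
      obtain ⟨w, hw⟩ := exists_degree_one H hac hadj
      -- edge finset of H is S'
      have hHE : H.edgeFinset = S' := by
        ext f
        rw [SimpleGraph.mem_edgeFinset, hH, SimpleGraph.edgeSet_fromEdgeSet]
        constructor
        · rintro ⟨hf, -⟩; exact hf
        · intro hf
          exact ⟨hf, T₁.not_isDiag_of_mem_edgeSet (hS'sub f hf)⟩
      -- evaluate the sum at w
      have hval : (∑ f ∈ S', evec f) w = 1 := by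
        have : (∑ f ∈ S', evec f) w = ∑ f ∈ S', (if w ∈ f then (1 : ZMod 2) else 0) := by
          rw [Finset.sum_apply]; rfl
        rw [this, ← Finset.sum_filter, Finset.sum_const, nsmul_eq_mul, mul_one]
        have : S'.filter (fun f => w ∈ f) = H.incidenceFinset w := by
          rw [SimpleGraph.incidenceFinset_eq_filter, hHE]
        rw [this]
        rw [SimpleGraph.card_incidenceFinset_eq_degree, hw]
        rfl
      rw [hsum] at hval
      simp at hval
    -- rank comparison
    have hsp : span (ZMod 2) (Set.range fun e : A => evec ((e : T₁.edgeSet) : Sym2 V)) ≤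
        span (ZMod 2) (↑(F.image evec) : Set (V → ZMod 2)) := by
      rw [span_le]
      rintro _ ⟨a, rfl⟩
      show evec ((a : T₁.edgeSet) : Sym2 V) ∈ span (ZMod 2) (↑(F.image evec) : Set (V → ZMod 2))
      have hdecomp : evec (((a : T₁.edgeSet) : Sym2 V)) = ∑ f ∈ t a, evec f := by
        rw [hEq (a : T₁.edgeSet), evec_mk (hUW (a : T₁.edgeSet)).ne]
        rw [← path_sum (hpa (a : T₁.edgeSet))]
      rw [hdecomp]
      apply Submodule.sum_mem
      intro f hf
      apply subset_span
      exact Finset.mem_coe.mpr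
        (Finset.mem_image_of_mem evec (Finset.mem_biUnion.mpr ⟨(a : T₁.edgeSet), a.2, hf⟩))
    calc A.card = Fintype.card A := (Fintype.card_coe A).symm
      _ = finrank (ZMod 2)
            (span (ZMod 2) (Set.range fun e : A => evec ((e : T₁.edgeSet) : Sym2 V))) :=
          (finrank_span_eq_card hli).symm
      _ ≤ finrank (ZMod 2) (span (ZMod 2) (↑(F.image evec) : Set (V → ZMod 2))) :=
          Submodule.finrank_mono hsp
      _ ≤ (F.image evec).card := finrank_span_finset_le_card _
      _ ≤ F.card := Finset.card_image_le
  obtain ⟨f, hfinj, hft⟩ := (Finset.all_card_le_biUnion_card_iff_exists_injective t).mp hall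
  -- build the bijection
  have hmemT2 : ∀ e : T₁.edgeSet, f e ∈ T₂.edgeSet := by
    intro e
    have := hft e
    rw [ht, List.mem_toFinset] at this
    exact Walk.edges_subset_edgeSet _ this
  set F2 : T₁.edgeSet → T₂.edgeSet := fun e => ⟨f e, hmemT2 e⟩ with hF2
  have hF2inj : Function.Injective F2 := by
    intro x y hxy
    exact hfinj (congrArg Subtype.val hxy)
  haveI : Fintype T₁.edgeSet := Fintype.ofFinite _
  haveI : Fintype T₂.edgeSet := Fintype.ofFinite _
  have hcards : Fintype.card T₁.edgeSet = Fintype.card T₂.edgeSet := by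
    have c1 := h1.card_edgeFinset
    have c2 := h2.card_edgeFinset
    have e1 : T₁.edgeFinset.card = Fintype.card T₁.edgeSet := Set.toFinset_card _
    have e2 : T₂.edgeFinset.card = Fintype.card T₂.edgeSet := Set.toFinset_card _
    omega
  have hbij : Function.Bijective F2 :=
    (Fintype.bijective_iff_injective_and_card F2).mpr ⟨hF2inj, hcards⟩
  refine ⟨Equiv.ofBijective F2 hbij, ?_⟩
  intro u v h p hp
  set e : T₁.edgeSet := ⟨s(u, v), T₁.mem_edgeSet.mpr h⟩ with he
  have hmem : ((Equiv.ofBijective F2 hbij) e : Sym2 V) ∈ (pa e).edges := by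
    have := hft e
    rw [ht, List.mem_toFinset] at this
    exact this
  have hEqe : s(u, v) = s(U e, W e) := hEq e
  rw [Sym2.eq_iff] at hEqe
  rcases hEqe with ⟨h1', h2'⟩ | ⟨h1', h2'⟩
  · have hq : ((pa e).copy h1'.symm h2'.symm).IsPath := by
      rw [Walk.isPath_copy]; exact hpa e
    have := h2.2.path_unique ⟨p, hp⟩ ⟨(pa e).copy h1'.symm h2'.symm, hq⟩
    have hpe : p.edges = (pa e).edges := by
      have hw : p = (pa e).copy h1'.symm h2'.symm := congrArg Subtype.val this
      rw [hw, Walk.edges_copy]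
    rw [hpe]
    exact hmem
  · have hq : ((pa e).copy h2'.symm h1'.symm).IsPath := by
      rw [Walk.isPath_copy]; exact hpa e
    have := h2.2.path_unique ⟨p.reverse, hp.reverse⟩ ⟨(pa e).copy h2'.symm h1'.symm, hq⟩
    have hpe : p.reverse.edges = (pa e).edges := by
      have hw : p.reverse = (pa e).copy h2'.symm h1'.symm := congrArg Subtype.val this
      rw [hw, Walk.edges_copy]
    have : ((Equiv.ofBijective F2 hbij) e : Sym2 V) ∈ p.reverse.edges := by
      rw [hpe]; exact hmem
    rwa [Walk.edges_reverse, List.mem_reverse] at this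
end

section
/- Let V be a finite set, let f : 𝒫(V) → ℝ be symmetric (f(W) = f(V \ W) for all W ⊆ V), and let g : ℝ → ℝ be non-decreasing. Let T₁ be a tree on V with the Gomory–Hu property for f: for every edge e = {u,v} of T₁, with C_e the connected component of u in T₁ − e, f(C_e) = min{ f(W) : W ⊆ V, |W ∩ {u,v}| = 1 }. Then for every tree T₂ on V, Σ_{e ∈ E(T₁)} g(f(C_e)) ≤ Σ_{e' ∈ E(T₂)} g(f(C_{e'})), where for each edge e' of T₂, C_{e'} denotes a connected component of T₂ − e'. -/
open Finset
open scoped Classical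

open SimpleGraph

private lemma walk_decomp {V : Type*} {G G' : SimpleGraph V} {a b : V}
    (hadj : ∀ x z : V, G.Adj x z → G'.Adj x z ∨ s(x, z) = s(a, b)) :
    ∀ {x y : V}, G.Walk x y →
      G'.Reachable x y ∨ (G'.Reachable x a ∧ G'.Reachable b y) ∨
        (G'.Reachable x b ∧ G'.Reachable a y) := by
  intro x y p
  induction p with
  | nil => exact Or.inl (Reachable.refl _)
  | @cons u v w h p ih =>
    rcases hadj _ _ h with h' | he
    · rcases ih with hr | ⟨hA, hB⟩ | ⟨hA, hB⟩
      · exact Or.inl (h'.reachable.trans hr)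
      · exact Or.inr (Or.inl ⟨h'.reachable.trans hA, hB⟩)
      · exact Or.inr (Or.inr ⟨h'.reachable.trans hA, hB⟩)
    · rw [Sym2.eq_iff] at he
      rcases he with ⟨rfl, rfl⟩ | ⟨rfl, rfl⟩
      · rcases ih with hr | ⟨hA, hB⟩ | ⟨hA, hB⟩
        · exact Or.inr (Or.inl ⟨Reachable.refl _, hr⟩)
        · exact Or.inl (hA.symm.trans hB)
        · exact Or.inl hB
      · rcases ih with hr | ⟨hA, hB⟩ | ⟨hA, hB⟩
        · exact Or.inr (Or.inr ⟨Reachable.refl _, hr⟩)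
        · exact Or.inl hB
        · exact Or.inl (hA.symm.trans hB)

private lemma del_adj_aux {V : Type*} (G : SimpleGraph V) (a b : V) :
    ∀ x z : V, G.Adj x z → (G.deleteEdges {s(a, b)}).Adj x z ∨ s(x, z) = s(a, b) := by
  intro x z h
  by_cases hc : s(x, z) = s(a, b)
  · exact Or.inr hc
  · exact Or.inl (by simp [SimpleGraph.deleteEdges_adj, h, hc])

private lemma two_comp {V : Type*} {G : SimpleGraph V} (hconn : G.Connected) (a b x : V) :
    (G.deleteEdges {s(a, b)}).Reachable a x ∨ (G.deleteEdges {s(a, b)}).Reachable b x := by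
  obtain ⟨p⟩ := hconn.preconnected a x
  rcases walk_decomp (del_adj_aux G a b) p with h | ⟨_, h⟩ | ⟨_, h⟩
  · exact Or.inl h
  · exact Or.inr h
  · exact Or.inl h

private lemma xor_mem {V : Type*} {G : SimpleGraph V} (hconn : G.Connected) {a b u v : V}
    (hsep : ¬ (G.deleteEdges {s(a, b)}).Reachable u v) :
    Xor' (u ∈ {x | (G.deleteEdges {s(a, b)}).Reachable a x})
      (v ∈ {x | (G.deleteEdges {s(a, b)}).Reachable a x}) := by
  by_cases h : (G.deleteEdges {s(a, b)}).Reachable a u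
  · exact Or.inl ⟨h, fun hv => hsep (h.symm.trans hv)⟩
  · have hu : (G.deleteEdges {s(a, b)}).Reachable b u := (two_comp hconn a b u).resolve_left h
    have hv : (G.deleteEdges {s(a, b)}).Reachable a v := by
      rcases two_comp hconn a b v with h' | h'
      · exact h'
      · exact absurd (hu.symm.trans h') hsep
    exact Or.inr ⟨hv, h⟩

private lemma reach_of_edge_reach {V : Type*} {G₁ G₂ : SimpleGraph V}
    (h : ∀ x z : V, G₁.Adj x z → G₂.Reachable x z) {x y : V}
    (hr : G₁.Reachable x y) : G₂.Reachable x y := by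
  obtain ⟨p⟩ := hr
  induction p with
  | nil => exact Reachable.refl _
  | @cons u v w h' p ih => exact (h _ _ h').trans ih

private lemma card_cc_bot {V : Type*} [Fintype V] :
    Nat.card (⊥ : SimpleGraph V).ConnectedComponent = Fintype.card V := by
  have hb : Function.Bijective ((⊥ : SimpleGraph V).connectedComponentMk) := by
    constructor
    · intro x y h
      exact SimpleGraph.reachable_bot.mp (SimpleGraph.ConnectedComponent.eq.mp h)
    · intro c
      obtain ⟨x, rfl⟩ := c.exists_rep
      exact ⟨x, rfl⟩
  rw [← Nat.card_eq_of_bijective _ hb, Nat.card_eq_fintype_card]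

private lemma from_insert_adj {V : Type*} (F : Finset (Sym2 V)) (a b : V) :
    ∀ x z : V, (fromEdgeSet (↑(insert s(a, b) F) : Set (Sym2 V))).Adj x z →
      (fromEdgeSet (↑F : Set (Sym2 V))).Adj x z ∨ s(x, z) = s(a, b) := by
  intro x z h
  rw [fromEdgeSet_adj] at h
  obtain ⟨hm, hne⟩ := h
  rw [Finset.mem_coe, Finset.mem_insert] at hm
  rcases hm with hm | hm
  · exact Or.inr hm
  · exact Or.inl (by rw [fromEdgeSet_adj]; exact ⟨hm, hne⟩)

private lemma cc_insert_le {V : Type*} [Fintype V] (F : Finset (Sym2 V)) (a b : V) :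
    Nat.card (fromEdgeSet (↑F : Set (Sym2 V))).ConnectedComponent ≤
      Nat.card (fromEdgeSet (↑(insert s(a, b) F) : Set (Sym2 V))).ConnectedComponent + 1 := by
  set G' := fromEdgeSet (↑F : Set (Sym2 V)) with hG'
  set G := fromEdgeSet (↑(insert s(a, b) F) : Set (Sym2 V)) with hG
  have hle : G' ≤ G := by
    apply fromEdgeSet_mono
    intro e he
    simp only [Finset.mem_coe] at he ⊢
    exact Finset.mem_insert_of_mem he
  set φ : G'.ConnectedComponent → G.ConnectedComponent :=
    SimpleGraph.ConnectedComponent.map (SimpleGraph.Hom.ofLE hle) with hφ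
  set θ : G'.ConnectedComponent → G.ConnectedComponent ⊕ Unit := fun c =>
    if c = G'.connectedComponentMk b then Sum.inr () else Sum.inl (φ c) with hθ
  have hinj : Function.Injective θ := by
    intro c d h
    by_cases hc : c = G'.connectedComponentMk b <;> by_cases hd : d = G'.connectedComponentMk b
    · rw [hc, hd]
    · simp [hθ, hc, hd] at h
    · simp [hθ, hc, hd] at h
    · simp only [hθ, hc, hd, if_neg, Sum.inl.injEq] at h
      obtain ⟨x, rfl⟩ : ∃ x, G'.connectedComponentMk x = c := c.exists_rep
      obtain ⟨y, rfl⟩ : ∃ y, G'.connectedComponentMk y = d := d.exists_rep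
      have hxy : G.Reachable x y := by
        rw [hφ] at h
        have h' : G.connectedComponentMk x = G.connectedComponentMk y := by
          simpa [SimpleGraph.ConnectedComponent.map_mk] using h
        exact SimpleGraph.ConnectedComponent.eq.mp h'
      obtain ⟨p⟩ := hxy
      rcases walk_decomp (from_insert_adj F a b) p with hr | ⟨hA, hB⟩ | ⟨hA, hB⟩
      · exact SimpleGraph.ConnectedComponent.eq.mpr hr
      · exact absurd (SimpleGraph.ConnectedComponent.eq.mpr hB.symm) hd
      · exact absurd (SimpleGraph.ConnectedComponent.eq.mpr hA) hc
  calc Nat.card G'.ConnectedComponent ≤ Nat.card (G.ConnectedComponent ⊕ Unit) :=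
        Nat.card_le_card_of_injective θ hinj
    _ = Nat.card G.ConnectedComponent + 1 := by rw [Nat.card_sum]; simp

private lemma cc_insert_ge {V : Type*} [Fintype V] (F : Finset (Sym2 V)) (a b : V) (hab : a ≠ b)
    (hnr : ¬ (fromEdgeSet (↑F : Set (Sym2 V))).Reachable a b) :
    Nat.card (fromEdgeSet (↑(insert s(a, b) F) : Set (Sym2 V))).ConnectedComponent + 1 ≤
      Nat.card (fromEdgeSet (↑F : Set (Sym2 V))).ConnectedComponent := by
  set G' := fromEdgeSet (↑F : Set (Sym2 V)) with hG'
  set G := fromEdgeSet (↑(insert s(a, b) F) : Set (Sym2 V)) with hG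
  have hle : G' ≤ G := by
    apply fromEdgeSet_mono
    intro e he
    simp only [Finset.mem_coe] at he ⊢
    exact Finset.mem_insert_of_mem he
  set φ : G'.ConnectedComponent → G.ConnectedComponent :=
    SimpleGraph.ConnectedComponent.map (SimpleGraph.Hom.ofLE hle) with hφ
  have hφmk : ∀ x : V, φ (G'.connectedComponentMk x) = G.connectedComponentMk x := by
    intro x; simp [hφ, SimpleGraph.ConnectedComponent.map_mk]
  have hadjG : G.Adj a b := by
    rw [hG, fromEdgeSet_adj]
    exact ⟨Finset.mem_coe.mpr (Finset.mem_insert_self _ _), hab⟩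
  have hne : G'.connectedComponentMk a ≠ G'.connectedComponentMk b := fun h =>
    hnr (SimpleGraph.ConnectedComponent.eq.mp h)
  have hsurj' : Function.Surjective
      (fun c : {c : G'.ConnectedComponent // c ≠ G'.connectedComponentMk b} => φ c.val) := by
    intro d
    obtain ⟨y, rfl⟩ : ∃ y, G.connectedComponentMk y = d := d.exists_rep
    by_cases h : G'.connectedComponentMk y = G'.connectedComponentMk b
    · refine ⟨⟨G'.connectedComponentMk a, hne⟩, ?_⟩
      have h2 : G.connectedComponentMk y = G.connectedComponentMk b := by
        exact SimpleGraph.ConnectedComponent.eq.mpr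
          (reach_of_edge_reach (fun x z hx => (hle hx).reachable)
            (SimpleGraph.ConnectedComponent.eq.mp h))
      simp only [hφmk]
      rw [h2]
      exact SimpleGraph.ConnectedComponent.eq.mpr hadjG.reachable
    · exact ⟨⟨G'.connectedComponentMk y, h⟩, hφmk y⟩
  have h1 : Nat.card G.ConnectedComponent ≤
      Nat.card {c : G'.ConnectedComponent // c ≠ G'.connectedComponentMk b} :=
    Nat.card_le_card_of_surjective _ hsurj'
  haveI : Fintype G'.ConnectedComponent := Fintype.ofFinite _
  haveI : Fintype G.ConnectedComponent := Fintype.ofFinite _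
  have h2 : Nat.card {c : G'.ConnectedComponent // c ≠ G'.connectedComponentMk b} + 1 =
      Nat.card G'.ConnectedComponent := by
    rw [Nat.card_eq_fintype_card, Nat.card_eq_fintype_card]
    have hc1 : Fintype.card {c : G'.ConnectedComponent // ¬ (c = G'.connectedComponentMk b)} =
        Fintype.card G'.ConnectedComponent -
          Fintype.card {c : G'.ConnectedComponent // c = G'.connectedComponentMk b} :=
      Fintype.card_subtype_compl _
    have hc2 : Fintype.card {c : G'.ConnectedComponent // c = G'.connectedComponentMk b} = 1 :=
      Fintype.card_subtype_eq _
    have hpos : 0 < Fintype.card G'.ConnectedComponent :=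
      Fintype.card_pos_iff.mpr ⟨G'.connectedComponentMk b⟩
    simp only [ne_eq, hc1, hc2]
    omega
  omega

private lemma card_le_cc_add_card {V : Type*} [Fintype V] (F : Finset (Sym2 V))
    (hF : ∀ e ∈ F, ¬ e.IsDiag) :
    Fintype.card V ≤ Nat.card (fromEdgeSet (↑F : Set (Sym2 V))).ConnectedComponent + F.card := by
  induction F using Finset.induction with
  | empty =>
    rw [Finset.coe_empty, SimpleGraph.fromEdgeSet_empty, card_cc_bot]
    simp
  | @insert e F hnm ih =>
    obtain ⟨a, b, rfl⟩ : ∃ a b : V, e = s(a, b) := by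
      induction e using Sym2.ind with | _ a b => exact ⟨a, b, rfl⟩
    have ih' := ih (fun e' he' => hF _ (Finset.mem_insert_of_mem he'))
    have hlc := cc_insert_le F a b
    have hcard : (insert s(a, b) F).card = F.card + 1 := Finset.card_insert_of_notMem hnm
    omega

private lemma cc_add_card_le {V : Type*} [Fintype V] {G₀ : SimpleGraph V} (hac : G₀.IsAcyclic) :
    ∀ F : Finset (Sym2 V), (↑F : Set (Sym2 V)) ⊆ G₀.edgeSet →
      Nat.card (fromEdgeSet (↑F : Set (Sym2 V))).ConnectedComponent + F.card ≤ Fintype.card V := by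
  intro F
  induction F using Finset.induction with
  | empty =>
    intro _
    rw [Finset.coe_empty, SimpleGraph.fromEdgeSet_empty, card_cc_bot]
    simp
  | @insert e F hnm ih =>
    intro hsub
    obtain ⟨a, b, rfl⟩ : ∃ a b : V, e = s(a, b) := by
      induction e using Sym2.ind with | _ a b => exact ⟨a, b, rfl⟩
    have hFsub : (↑F : Set (Sym2 V)) ⊆ G₀.edgeSet := by
      intro e' he'
      exact hsub (by rw [Finset.coe_insert]; exact Set.mem_insert_of_mem _ he')
    have hadj : G₀.Adj a b := by
      rw [← SimpleGraph.mem_edgeSet]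
      exact hsub (by rw [Finset.coe_insert]; exact Set.mem_insert _ _)
    have hab : a ≠ b := hadj.ne
    have hnr : ¬ (fromEdgeSet (↑F : Set (Sym2 V))).Reachable a b := by
      rintro ⟨w⟩
      set p := w.toPath with hp
      have hT : ∀ e' ∈ p.val.edges, e' ∈ G₀.edgeSet := by
        intro e' he'
        have h' := p.val.edges_subset_edgeSet he'
        rw [edgeSet_fromEdgeSet] at h'
        exact hFsub h'.1
      have hnotin : s(a, b) ∉ p.val.edges := by
        intro hin
        have h' := p.val.edges_subset_edgeSet hin
        rw [edgeSet_fromEdgeSet] at h'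
        exact hnm (Finset.mem_coe.mp h'.1)
      have hcyc := SimpleGraph.Path.cons_isCycle
        (⟨p.val.transfer G₀ hT, p.prop.transfer hT⟩ : G₀.Path a b) hadj.symm
        (by rw [SimpleGraph.Walk.edges_transfer]
            rw [Sym2.eq_swap]
            exact hnotin)
      exact hac _ hcyc
    have hge := cc_insert_ge F a b hab hnr
    have ih' := ih hFsub
    have hcard : (insert s(a, b) F).card = F.card + 1 := Finset.card_insert_of_notMem hnm
    omega

private lemma path_edge_sep {V : Type*} {G : SimpleGraph V} (ht : G.IsTree) {u v : V}
    (p : G.Walk u v) (hp : p.IsPath) {e : Sym2 V} (he : e ∈ p.edges) :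
    ¬ (G.deleteEdges {e}).Reachable u v := by
  rintro ⟨w⟩
  set q := w.toPath with hq
  have hqsub : ∀ e' ∈ q.val.edges, e' ∈ G.edgeSet := by
    intro e' h'
    have := q.val.edges_subset_edgeSet h'
    rw [SimpleGraph.edgeSet_deleteEdges] at this
    exact this.1
  have hqe : e ∉ q.val.edges := by
    intro h'
    have := q.val.edges_subset_edgeSet h'
    rw [SimpleGraph.edgeSet_deleteEdges] at this
    exact this.2 rfl
  have hpeq : (⟨q.val.transfer G hqsub, q.prop.transfer hqsub⟩ : G.Path u v) = ⟨p, hp⟩ :=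
    ht.IsAcyclic.path_unique _ _
  have hedges : (q.val.transfer G hqsub).edges = p.edges := by
    have h' := congrArg Subtype.val hpeq
    exact congrArg SimpleGraph.Walk.edges h'
  rw [SimpleGraph.Walk.edges_transfer] at hedges
  exact hqe (hedges ▸ he)

private lemma sym2_exists {α : Type*} (e : Sym2 α) : ∃ a b : α, e = s(a, b) := by
  induction e using Sym2.ind with | _ a b => exact ⟨a, b, rfl⟩

/-- A Gomory–Hu tree `T₁` for a symmetric set function `f` minimizes
`∑_{e ∈ T} g(f(C_e))` over all trees `T` on `V`, for every non-decreasing `g`. -/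
theorem stmt8 {V : Type*} [Fintype V] (f : Set V → ℝ)
    (hfsym : ∀ W : Set V, f W = f Wᶜ)
    (g : ℝ → ℝ) (hg : Monotone g)
    (T₁ T₂ : SimpleGraph V) (h1 : T₁.IsTree) (h2 : T₂.IsTree)
    (C₁ C₂ : Sym2 V → Set V)
    (hC₁ : ∀ u v : V, T₁.Adj u v →
      C₁ s(u, v) = {x | (T₁.deleteEdges {s(u, v)}).Reachable u x} ∨
      C₁ s(u, v) = {x | (T₁.deleteEdges {s(u, v)}).Reachable v x})
    (hC₂ : ∀ u v : V, T₂.Adj u v →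
      C₂ s(u, v) = {x | (T₂.deleteEdges {s(u, v)}).Reachable u x} ∨
      C₂ s(u, v) = {x | (T₂.deleteEdges {s(u, v)}).Reachable v x})
    (hGH : ∀ u v : V, T₁.Adj u v →
      IsLeast {r : ℝ | ∃ W : Set V, Xor' (u ∈ W) (v ∈ W) ∧ r = f W} (f (C₁ s(u, v)))) :
    ∑ e ∈ T₁.edgeFinset, g (f (C₁ e)) ≤ ∑ e ∈ T₂.edgeFinset, g (f (C₂ e)) := by
  classical
  let sep : Sym2 V → Sym2 V → Prop := fun e' e =>
    Sym2.lift ⟨fun u v => ¬ (T₂.deleteEdges {e'}).Reachable u v,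
      fun u v => congrArg Not (propext SimpleGraph.reachable_comm)⟩ e
  let N : Sym2 V → Finset (Sym2 V) := fun e =>
    T₂.edgeFinset.filter (fun e' => sep e' e)
  have hNmem : ∀ e e' : Sym2 V, e' ∈ N e ↔ e' ∈ T₂.edgeFinset ∧ sep e' e := fun e e' =>
    Finset.mem_filter
  have hsepmk : ∀ (e' : Sym2 V) (u v : V),
      sep e' s(u, v) ↔ ¬ (T₂.deleteEdges {e'}).Reachable u v := fun _ _ _ => Iff.rfl
  -- each edge of `T₁` has its endpoints joined inside the neighborhood edge set
  have hreach : ∀ (s : Finset {e // e ∈ T₁.edgeFinset}) (i : {e // e ∈ T₁.edgeFinset}),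
      i ∈ s → ∀ u v : V, i.val = s(u, v) →
      (fromEdgeSet (↑(s.biUnion (fun j => N j.val)) : Set (Sym2 V))).Reachable u v := by
    intro s i hi u v hival
    obtain ⟨w⟩ := h2.isConnected.preconnected u v
    set p := w.toPath with hp
    have hpe : ∀ e' ∈ p.val.edges,
        e' ∈ (fromEdgeSet (↑(s.biUnion (fun j => N j.val)) : Set (Sym2 V))).edgeSet := by
      intro e' he'
      have h2e : e' ∈ T₂.edgeSet := p.val.edges_subset_edgeSet he'
      have hsep' : ¬ (T₂.deleteEdges {e'}).Reachable u v :=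
        path_edge_sep h2 p.val p.prop he'
      have hmem : e' ∈ s.biUnion (fun j => N j.val) := by
        refine Finset.mem_biUnion.mpr ⟨i, hi, ?_⟩
        rw [hNmem]
        refine ⟨SimpleGraph.mem_edgeFinset.mpr h2e, ?_⟩
        rw [hival, hsepmk]
        exact hsep'
      rw [SimpleGraph.edgeSet_fromEdgeSet]
      exact ⟨Finset.mem_coe.mpr hmem, T₂.not_isDiag_of_mem_edgeSet h2e⟩
    exact ⟨p.val.transfer _ hpe⟩
  -- Hall's condition
  have hall : ∀ s : Finset {e // e ∈ T₁.edgeFinset},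
      s.card ≤ (s.biUnion (fun j => N j.val)).card := by
    intro s
    set S : Finset (Sym2 V) := s.image Subtype.val with hS
    have hcardS : S.card = s.card := Finset.card_image_of_injective _ Subtype.val_injective
    set NS := s.biUnion (fun j => N j.val) with hNS
    have hSsub : (↑S : Set (Sym2 V)) ⊆ T₁.edgeSet := by
      intro e he
      rw [Finset.mem_coe, hS, Finset.mem_image] at he
      obtain ⟨j, _, rfl⟩ := he
      exact SimpleGraph.mem_edgeFinset.mp j.prop
    have hNSdiag : ∀ e ∈ NS, ¬ e.IsDiag := by
      intro e he
      rw [hNS, Finset.mem_biUnion] at he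
      obtain ⟨j, _, hj⟩ := he
      exact T₂.not_isDiag_of_mem_edgeSet (SimpleGraph.mem_edgeFinset.mp ((hNmem _ _).mp hj).1)
    have hkey : ∀ x z : V, (fromEdgeSet (↑S : Set (Sym2 V))).Adj x z →
        (fromEdgeSet (↑NS : Set (Sym2 V))).Reachable x z := by
      intro x z hxz
      rw [SimpleGraph.fromEdgeSet_adj] at hxz
      obtain ⟨hmem', _⟩ := hxz
      rw [Finset.mem_coe, hS, Finset.mem_image] at hmem'
      obtain ⟨j, hjs, hjval⟩ := hmem'
      exact hreach s j hjs x z hjval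
    let ψ : (fromEdgeSet (↑S : Set (Sym2 V))).ConnectedComponent →
        (fromEdgeSet (↑NS : Set (Sym2 V))).ConnectedComponent :=
      SimpleGraph.ConnectedComponent.lift
        (fun x => (fromEdgeSet (↑NS : Set (Sym2 V))).connectedComponentMk x)
        (fun v w p _ => SimpleGraph.ConnectedComponent.eq.mpr (reach_of_edge_reach hkey ⟨p⟩))
    have hψsur : Function.Surjective ψ := by
      intro c
      obtain ⟨x, rfl⟩ : ∃ x, (fromEdgeSet (↑NS : Set (Sym2 V))).connectedComponentMk x = c :=
        c.exists_rep
      exact ⟨(fromEdgeSet (↑S : Set (Sym2 V))).connectedComponentMk x, rfl⟩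
    have hcc : Nat.card (fromEdgeSet (↑NS : Set (Sym2 V))).ConnectedComponent ≤
        Nat.card (fromEdgeSet (↑S : Set (Sym2 V))).ConnectedComponent :=
      Nat.card_le_card_of_surjective ψ hψsur
    have h1c := cc_add_card_le h1.IsAcyclic S hSsub
    have h2c := card_le_cc_add_card NS hNSdiag
    omega
  obtain ⟨σ, hσinj, hσmem⟩ :=
    (Finset.all_card_le_biUnion_card_iff_exists_injective
      (fun j : {e // e ∈ T₁.edgeFinset} => N j.val)).mp hall
  -- termwise comparison
  have hterm : ∀ i : {e // e ∈ T₁.edgeFinset}, g (f (C₁ i.val)) ≤ g (f (C₂ (σ i))) := by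
    intro i
    obtain ⟨u, v, hival⟩ := sym2_exists i.val
    have hadj1 : T₁.Adj u v := by
      rw [← SimpleGraph.mem_edgeSet, ← hival]
      exact SimpleGraph.mem_edgeFinset.mp i.prop
    have hσm := (hNmem _ _).mp (hσmem i)
    obtain ⟨hσT₂, hσsep⟩ := hσm
    rw [hival, hsepmk] at hσsep
    obtain ⟨a, b, hab⟩ := sym2_exists (σ i)
    have hadj2 : T₂.Adj a b := by
      rw [← SimpleGraph.mem_edgeSet, ← hab]
      exact SimpleGraph.mem_edgeFinset.mp hσT₂
    have hxor : Xor' (u ∈ C₂ (σ i)) (v ∈ C₂ (σ i)) := by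
      rw [hab] at hσsep ⊢
      rcases hC₂ a b hadj2 with hC | hC
      · rw [hC]
        exact xor_mem h2.isConnected hσsep
      · rw [hC, show s(a, b) = s(b, a) from Sym2.eq_swap]
        rw [show s(a, b) = s(b, a) from Sym2.eq_swap] at hσsep
        exact xor_mem h2.isConnected hσsep
    have hle := (hGH u v hadj1).2 ⟨C₂ (σ i), hxor, rfl⟩
    rw [hival]
    exact hg hle
  have hmeT₂ : ∀ i, σ i ∈ T₂.edgeFinset := fun i => ((hNmem _ _).mp (hσmem i)).1
  let σ' : {e // e ∈ T₁.edgeFinset} → {e // e ∈ T₂.edgeFinset} := fun i => ⟨σ i, hmeT₂ i⟩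
  have hσ'inj : Function.Injective σ' := fun i j h => hσinj (congrArg Subtype.val h)
  have hcards : Fintype.card {e // e ∈ T₁.edgeFinset} =
      Fintype.card {e // e ∈ T₂.edgeFinset} := by
    rw [Fintype.card_coe, Fintype.card_coe]
    have c1 := h1.card_edgeFinset
    have c2 := h2.card_edgeFinset
    omega
  have hbij : Function.Bijective σ' :=
    (Fintype.bijective_iff_injective_and_card σ').mpr ⟨hσ'inj, hcards⟩
  calc ∑ e ∈ T₁.edgeFinset, g (f (C₁ e))
      = ∑ i : {e // e ∈ T₁.edgeFinset}, g (f (C₁ i.val)) := (Finset.sum_coe_sort _ _).symm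
    _ ≤ ∑ i : {e // e ∈ T₁.edgeFinset}, g (f (C₂ (σ' i).val)) :=
        Finset.sum_le_sum (fun i _ => hterm i)
    _ = ∑ j : {e // e ∈ T₂.edgeFinset}, g (f (C₂ j.val)) :=
        Fintype.sum_bijective σ' hbij _ _ (fun i => rfl)
    _ = ∑ e ∈ T₂.edgeFinset, g (f (C₂ e)) :=
        Finset.sum_coe_sort T₂.edgeFinset (fun e => g (f (C₂ e)))
end

section
/- Let λ > 0, φ > 0, and α > 0 be real numbers. Then for every ω > 0, 8φλ/ω² + αω ≥ 3·2^{1/3}·λ^{1/3}·φ^{1/3}·α^{2/3}, and equality holds if and only if ω = (16·φ·λ/α)^{1/3}. -/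
/-- Minimal maintenance cost of a balanced channel: for all `ω > 0`,
`8φλ/ω² + αω ≥ 3·2^{1/3}·λ^{1/3}·φ^{1/3}·α^{2/3}`, with equality iff
`ω = (16φλ/α)^{1/3}`. -/
theorem stmt11 (lam φ α : ℝ) (hlam : 0 < lam) (hφ : 0 < φ) (hα : 0 < α)
    (ω : ℝ) (hω : 0 < ω) :
    (3 * 2 ^ ((1 : ℝ) / 3) * lam ^ ((1 : ℝ) / 3) * φ ^ ((1 : ℝ) / 3) * α ^ ((2 : ℝ) / 3)
        ≤ 8 * φ * lam / ω ^ 2 + α * ω) ∧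
    ((8 * φ * lam / ω ^ 2 + α * ω
        = 3 * 2 ^ ((1 : ℝ) / 3) * lam ^ ((1 : ℝ) / 3) * φ ^ ((1 : ℝ) / 3) * α ^ ((2 : ℝ) / 3))
      ↔ ω = (16 * φ * lam / α) ^ ((1 : ℝ) / 3)) := by
  set ω₀ : ℝ := (16 * φ * lam / α) ^ ((1 : ℝ) / 3) with hω₀def
  have hx : (0:ℝ) < 16 * φ * lam / α := by positivity
  have hω₀ : 0 < ω₀ := Real.rpow_pos_of_pos hx _
  have cube : ∀ x : ℝ, 0 ≤ x → (x ^ ((1:ℝ)/3)) ^ 3 = x := by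
    intro x hxx
    rw [← Real.rpow_natCast (x ^ ((1:ℝ)/3)) 3, ← Real.rpow_mul hxx]
    norm_num
  have hcube : ω₀ ^ 3 = 16 * φ * lam / α := cube _ hx.le
  have h8 : 8 * φ * lam = α / 2 * ω₀ ^ 3 := by
    rw [hcube]; field_simp; ring
  -- the constant equals (3/2) α ω₀
  have hK : 3 * 2 ^ ((1 : ℝ) / 3) * lam ^ ((1 : ℝ) / 3) * φ ^ ((1 : ℝ) / 3) * α ^ ((2 : ℝ) / 3)
      = 3 / 2 * α * ω₀ := by
    have hKpos : 0 < 3 * 2 ^ ((1 : ℝ) / 3) * lam ^ ((1 : ℝ) / 3) * φ ^ ((1 : ℝ) / 3)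
        * α ^ ((2 : ℝ) / 3) := by positivity
    have hLpos : 0 < 3 / 2 * α * ω₀ := by positivity
    have h23 : ((α : ℝ) ^ ((2:ℝ)/3)) ^ 3 = α ^ 2 := by
      rw [← Real.rpow_natCast (α ^ ((2:ℝ)/3)) 3, ← Real.rpow_mul hα.le]
      norm_num
    have hcubes : (3 * 2 ^ ((1 : ℝ) / 3) * lam ^ ((1 : ℝ) / 3) * φ ^ ((1 : ℝ) / 3)
        * α ^ ((2 : ℝ) / 3)) ^ 3 = (3 / 2 * α * ω₀) ^ 3 := by
      rw [mul_pow, mul_pow, mul_pow, mul_pow, mul_pow,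
        cube 2 (by norm_num), cube lam hlam.le, cube φ hφ.le, h23, hcube]
      field_simp
      ring
    exact (Odd.strictMono_pow (R := ℝ) (⟨1, by norm_num⟩ : Odd 3)).injective hcubes
  rw [hK]
  have key : 0 ≤ ω₀ ^ 3 + 2 * ω ^ 3 - 3 * ω₀ * ω ^ 2 := by
    nlinarith [mul_nonneg (sq_nonneg (ω₀ - ω)) (by positivity : (0:ℝ) ≤ ω₀ + 2 * ω)]
  have hω2 : (0:ℝ) < ω ^ 2 := by positivity
  constructor
  · rw [h8, ← sub_nonneg]
    have hrw : α / 2 * ω₀ ^ 3 / ω ^ 2 + α * ω - 3 / 2 * α * ω₀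
        = α / 2 * (ω₀ ^ 3 + 2 * ω ^ 3 - 3 * ω₀ * ω ^ 2) / ω ^ 2 := by
      field_simp
    rw [hrw]
    exact div_nonneg (mul_nonneg (by positivity) key) hω2.le
  · constructor
    · intro h
      rw [h8] at h
      have hpoly : ω₀ ^ 3 + 2 * ω ^ 3 - 3 * ω₀ * ω ^ 2 = 0 := by
        have h' : α / 2 * ω₀ ^ 3 + α * ω * ω ^ 2 = 3 / 2 * α * ω₀ * ω ^ 2 := by
          field_simp at h; linear_combination (α / 2) * h
        have : α * (ω₀ ^ 3 + 2 * ω ^ 3 - 3 * ω₀ * ω ^ 2) = 0 := by linarith [h']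
        have := mul_eq_zero.mp this
        rcases this with h0 | h0
        · exact absurd h0 hα.ne'
        · exact h0
      have hfac : (ω₀ - ω) ^ 2 * (ω₀ + 2 * ω) = 0 := by nlinarith [hpoly]
      rcases mul_eq_zero.mp hfac with h0 | h0
      · have := pow_eq_zero_iff (n := 2) (by norm_num) |>.mp h0
        linarith [sub_eq_zero.mp this]
      · nlinarith
    · intro h
      subst h
      rw [h8]
      field_simp
      ring
end

section
/- For every real K > 0 there exist an integer k ≥ 4, a symmetric nonnegative demand matrix (λ_{i,j}) on vertex set V = {v₁,...,v_k}, and two trees T* and T' on V, such that Σ_{e ∈ E(T*)} (λ_e(T*))^{1/3} > K · Σ_{e' ∈ E(T')} (λ_{e'}(T'))^{1/3} and Σ_{e' ∈ E(T')} (λ_{e'}(T'))^{1/3} > 0, where for a tree T and edge e of T, λ_e(T) denotes the λ-capacity Σ_{i ∈ C_e, j ∉ C_e} λ_{i,j} of the cut between the two connected components of T − e. -/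
open Finset
open scoped Classical

open SimpleGraph

set_option maxHeartbeats 1000000

lemma reach_closed {V : Type*} {G : SimpleGraph V} (S : Set V)
    (h : ∀ x y, G.Adj x y → (x ∈ S ↔ y ∈ S)) {x y : V} (hr : G.Reachable x y) :
    x ∈ S ↔ y ∈ S := by
  obtain ⟨w⟩ := hr
  induction w with
  | nil => exact Iff.rfl
  | cons ha _ ih => exact (h _ _ ha).trans ih

lemma side_lemma {n : ℕ} {u v : Fin n} (hu : (u : ℕ) + 1 = (v : ℕ)) {x y : Fin n}
    (hr : ((pathGraph n).deleteEdges {s(u,v)}).Reachable x y) :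
    ((x : ℕ) ≤ u ↔ (y : ℕ) ≤ u) := by
  refine reach_closed {z : Fin n | (z : ℕ) ≤ u} ?_ hr
  intro a b hab
  rw [SimpleGraph.deleteEdges_adj] at hab
  obtain ⟨hadj, hne⟩ := hab
  simp only [Set.mem_singleton_iff, Sym2.eq_iff, not_or, not_and] at hne
  rw [pathGraph_adj] at hadj
  simp only [Set.mem_setOf_eq]
  constructor
  · intro ha
    by_contra hb
    rcases hadj with h1 | h1
    · have hau : a = u := Fin.ext (by omega)
      have hbv : b = v := Fin.ext (by omega)
      exact (hne.1 hau) hbv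
    · omega
  · intro hb
    by_contra ha
    rcases hadj with h1 | h1
    · omega
    · have hbu : b = u := Fin.ext (by omega)
      have hav : a = v := Fin.ext (by omega)
      exact (hne.2 hav) hbu

lemma reach_down {n : ℕ} {u v : Fin n} (hu : (u : ℕ) + 1 = (v : ℕ)) (a : Fin n)
    (ha : (a : ℕ) ≤ (u : ℕ)) :
    ((pathGraph n).deleteEdges {s(u,v)}).Reachable a u := by
  obtain ⟨d, hd⟩ : ∃ d, (a : ℕ) + d = (u : ℕ) := ⟨u - a, by omega⟩
  induction d generalizing a with
  | zero =>
    have : a = u := Fin.ext (by omega)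
    subst this; exact Reachable.refl _
  | succ d ih =>
    have hlt : (a : ℕ) + 1 < n := by omega
    set a' : Fin n := ⟨(a : ℕ) + 1, hlt⟩ with ha'
    have hadj : ((pathGraph n).deleteEdges {s(u,v)}).Adj a a' := by
      rw [SimpleGraph.deleteEdges_adj]
      constructor
      · rw [pathGraph_adj]; left; simp [ha']
      · simp only [Set.mem_singleton_iff, Sym2.eq_iff, not_or, not_and]
        constructor
        · intro hau; exfalso
          have : (a : ℕ) = (u : ℕ) := congrArg Fin.val hau
          omega
        · intro hav; exfalso
          have : (a : ℕ) = (v : ℕ) := congrArg Fin.val hav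
          omega
    exact hadj.reachable.trans (ih a' (by simp [ha']; omega) (by simp [ha']; omega))

lemma reach_up {n : ℕ} {u v : Fin n} (hu : (u : ℕ) + 1 = (v : ℕ)) (b : Fin n)
    (hb : (v : ℕ) ≤ (b : ℕ)) :
    ((pathGraph n).deleteEdges {s(u,v)}).Reachable v b := by
  obtain ⟨d, hd⟩ : ∃ d, (v : ℕ) + d = (b : ℕ) := ⟨b - v, by omega⟩
  induction d generalizing b with
  | zero =>
    have : b = v := Fin.ext (by omega)
    subst this; exact Reachable.refl _
  | succ d ih =>
    have hlt : (b : ℕ) - 1 < n := by omega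
    set b' : Fin n := ⟨(b : ℕ) - 1, hlt⟩ with hb'
    have hadj : ((pathGraph n).deleteEdges {s(u,v)}).Adj b' b := by
      rw [SimpleGraph.deleteEdges_adj]
      constructor
      · rw [pathGraph_adj]; left; simp [hb']; omega
      · simp only [Set.mem_singleton_iff, Sym2.eq_iff, not_or, not_and]
        constructor
        · intro hb'u; exfalso
          have : ((b' : Fin n) : ℕ) = (u : ℕ) := congrArg Fin.val hb'u
          simp [hb'] at this; omega
        · intro hb'v; intro hbu; 
          have : (b : ℕ) = (u : ℕ) := congrArg Fin.val hbu
          omega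
    exact (ih b' (by simp [hb']; omega) (by simp [hb']; omega)).trans hadj.reachable

lemma sum_pair_ind {n : ℕ} (A B : Finset (Fin n)) (a b : Fin n) :
    (∑ x ∈ A, ∑ y ∈ B, if x = a ∧ y = b then (1:ℝ) else 0)
      = if a ∈ A ∧ b ∈ B then 1 else 0 := by
  have inner : ∀ x : Fin n, (∑ y ∈ B, if x = a ∧ y = b then (1:ℝ) else 0)
      = if x = a then (if b ∈ B then (1:ℝ) else 0) else 0 := by
    intro x
    by_cases hx : x = a
    · subst hx; simp [Finset.sum_ite_eq' B b (fun _ => (1:ℝ))]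
    · simp [hx]
  rw [Finset.sum_congr rfl (fun x _ => inner x)]
  rw [Finset.sum_ite_eq' A a (fun _ => if b ∈ B then (1:ℝ) else 0)]
  by_cases ha : a ∈ A <;> by_cases hb : b ∈ B <;> simp [ha, hb]

lemma pathGraph_isTree (m : ℕ) : (pathGraph (m + 4)).IsTree := by
  constructor
  · exact pathGraph_connected (m + 3)
  · rw [isAcyclic_iff_forall_adj_isBridge]
    intro a b hab
    rw [isBridge_iff]
    rw [pathGraph_adj] at hab
    intro hr
    rcases hab with h1 | h1
    · have := side_lemma h1 hr
      omega
    · rw [Sym2.eq_swap] at hr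
      have := side_lemma h1 hr.symm
      omega

lemma map_isTree {n : ℕ} [Nonempty (Fin n)] {G : SimpleGraph (Fin n)} (hG : G.IsTree)
    (σ : Fin n ≃ Fin n) : (G.map σ.toEmbedding).IsTree := by
  constructor
  · exact (Iso.connected_iff (Iso.map σ G)).mp hG.isConnected
  · intro v c hc
    have hinj : Function.Injective ((Iso.map σ G).symm.toHom) :=
      (Iso.map σ G).symm.toEquiv.injective
    exact hG.IsAcyclic (c.map (Iso.map σ G).symm.toHom)
      ((SimpleGraph.Walk.map_isCycle_iff_of_injective hinj).mpr hc)


/-- Unbounded price of anarchy (cost-ratio form): for every `K > 0` there are `k ≥ 4`,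
a symmetric nonnegative demand matrix on `Fin k`, and trees `Ts` (an equilibrium) and
`To` (optimal) on `Fin k`, such that the maintenance-cost objective `∑_e λ_e^{1/3}` of
`Ts` exceeds `K` times that of `To`, the latter being positive.  Here the rate `λ_e` of
a tree edge `e = {u,v}` is the λ-capacity of the cut between the two connected
components of `T − e`. -/
theorem stmt14 : ∀ K : ℝ, 0 < K →
    ∃ k : ℕ, 4 ≤ k ∧
    ∃ (lam : Fin k → Fin k → ℝ) (_hnn : ∀ i j, 0 ≤ lam i j)
      (_hsym : ∀ i j, lam i j = lam j i)
      (Ts To : SimpleGraph (Fin k)) (_hTs : Ts.IsTree) (_hTo : To.IsTree)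
      (caps capo : Sym2 (Fin k) → ℝ),
      (∀ u v : Fin k, Ts.Adj u v →
        caps s(u, v) =
          ∑ x ∈ Finset.univ.filter (fun x => (Ts.deleteEdges {s(u, v)}).Reachable u x),
            ∑ y ∈ Finset.univ.filter (fun y => ¬ (Ts.deleteEdges {s(u, v)}).Reachable u y),
              lam x y) ∧
      (∀ u v : Fin k, To.Adj u v →
        capo s(u, v) =
          ∑ x ∈ Finset.univ.filter (fun x => (To.deleteEdges {s(u, v)}).Reachable u x),
            ∑ y ∈ Finset.univ.filter (fun y => ¬ (To.deleteEdges {s(u, v)}).Reachable u y),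
              lam x y) ∧
      0 < ∑ e ∈ To.edgeFinset, capo e ^ ((1 : ℝ) / 3) ∧
      K * ∑ e ∈ To.edgeFinset, capo e ^ ((1 : ℝ) / 3)
        < ∑ e ∈ Ts.edgeFinset, caps e ^ ((1 : ℝ) / 3) := by
  intro K hK
  set m : ℕ := ⌈K⌉₊ with hm
  set n : ℕ := m + 4 with hn
  refine ⟨n, by omega, ?_⟩
  set p : Fin n := (0 : Fin n) with hp
  set q : Fin n := ⟨m + 3, by omega⟩ with hq
  have hpval : (p : ℕ) = 0 := rfl
  have hqval : (q : ℕ) = m + 3 := rfl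
  have hpq : p ≠ q := by
    intro h; have := congrArg Fin.val h; simp [hpval, hqval] at this
  set lam : Fin n → Fin n → ℝ :=
    fun x y => if (x = p ∧ y = q) ∨ (x = q ∧ y = p) then 1 else 0 with hlam
  have lam_split : ∀ x y, lam x y =
      (if x = p ∧ y = q then (1:ℝ) else 0) + (if x = q ∧ y = p then (1:ℝ) else 0) := by
    intro x y
    rw [hlam]
    by_cases h1 : x = p ∧ y = q <;> by_cases h2 : x = q ∧ y = p
    · exact absurd (h1.1.symm.trans h2.1) hpq
    all_goals simp [h1, h2] <;> tauto
  set Ts : SimpleGraph (Fin n) := pathGraph n with hTsdef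
  set σ : Fin n ≃ Fin n := Equiv.swap (1 : Fin n) q with hσ
  set To : SimpleGraph (Fin n) := Ts.map σ.toEmbedding with hTodef
  have hTsTree : Ts.IsTree := pathGraph_isTree m
  have hToTree : To.IsTree := map_isTree hTsTree σ
  have h1val : ((1 : Fin n) : ℕ) = 1 := rfl
  have hTo0q : To.Adj p q := by
    rw [hTodef, SimpleGraph.map_adj]
    refine ⟨0, 1, ?_, ?_, ?_⟩
    · rw [hTsdef, pathGraph_adj]; left; rfl
    · show σ 0 = p
      rw [hσ]
      refine Equiv.swap_apply_of_ne_of_ne ?_ ?_ <;>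
        (intro h; have := congrArg Fin.val h; simp [hqval] at this <;> omega)
    · show σ 1 = q
      rw [hσ]; exact Equiv.swap_apply_left _ _
  set caps : Sym2 (Fin n) → ℝ := fun _ => 1 with hcaps
  set capo : Sym2 (Fin n) → ℝ := fun e => if e = s(p, q) then 1 else 0 with hcapo
  -- generic cut-sum evaluation
  have cut_eval : ∀ (G : SimpleGraph (Fin n)) (u : Fin n),
      (∑ x ∈ Finset.univ.filter (fun x => G.Reachable u x),
        ∑ y ∈ Finset.univ.filter (fun y => ¬ G.Reachable u y), lam x y)
      = (if G.Reachable u p ∧ ¬ G.Reachable u q then (1:ℝ) else 0)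
        + (if G.Reachable u q ∧ ¬ G.Reachable u p then (1:ℝ) else 0) := by
    intro G u
    have : (∑ x ∈ Finset.univ.filter (fun x => G.Reachable u x),
        ∑ y ∈ Finset.univ.filter (fun y => ¬ G.Reachable u y), lam x y)
      = (∑ x ∈ Finset.univ.filter (fun x => G.Reachable u x),
          ∑ y ∈ Finset.univ.filter (fun y => ¬ G.Reachable u y),
            (if x = p ∧ y = q then (1:ℝ) else 0))
        + (∑ x ∈ Finset.univ.filter (fun x => G.Reachable u x),
          ∑ y ∈ Finset.univ.filter (fun y => ¬ G.Reachable u y),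
            (if x = q ∧ y = p then (1:ℝ) else 0)) := by
      rw [← Finset.sum_add_distrib]
      refine Finset.sum_congr rfl fun x _ => ?_
      rw [← Finset.sum_add_distrib]
      exact Finset.sum_congr rfl fun y _ => lam_split x y
    rw [this, sum_pair_ind, sum_pair_ind]
    simp only [Finset.mem_filter, Finset.mem_univ, true_and]
  refine ⟨lam, ?_, ?_, Ts, To, hTsTree, hToTree, caps, capo, ?_, ?_, ?_, ?_⟩
  · intro i j; simp only [hlam]; split_ifs <;> norm_num
  · intro i j; simp only [hlam]
    refine if_congr ?_ rfl rfl
    tauto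
  · -- Ts constraint
    intro u v huv
    refine Eq.trans ?_ (Eq.trans (cut_eval (Ts.deleteEdges {s(u, v)}) u).symm (by congr!))
    have hadj := huv
    rw [hTsdef, pathGraph_adj] at hadj
    rcases hadj with h1 | h1
    · have hup : (Ts.deleteEdges {s(u,v)}).Reachable u p :=
        (reach_down h1 p (by omega)).symm
      have hnq : ¬ (Ts.deleteEdges {s(u,v)}).Reachable u q := by
        intro hq'
        have := side_lemma h1 (hup.symm.trans hq')
        have hv : (v : ℕ) < n := v.isLt
        simp [hpval, hqval] at this
        omega
      simp [hcaps, hup, hnq]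
    · have huq : (Ts.deleteEdges {s(u,v)}).Reachable u q := by
        have := reach_up h1 q (by simp [hqval]; omega)
        rwa [Sym2.eq_swap] at this
      have hnp : ¬ (Ts.deleteEdges {s(u,v)}).Reachable u p := by
        intro hp'
        rw [Sym2.eq_swap] at hp'
        have := side_lemma h1 hp'
        simp [hpval] at this
        omega
      simp [hcaps, huq, hnp]
  · -- To constraint
    intro u v huv
    refine Eq.trans ?_ (Eq.trans (cut_eval (To.deleteEdges {s(u, v)}) u).symm (by congr!))
    by_cases he : s(u, v) = s(p, q)
    · have hbridge : ¬ (To.deleteEdges {s(u,v)}).Reachable u v :=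
        (isBridge_iff.mp (isAcyclic_iff_forall_adj_isBridge.mp hToTree.IsAcyclic huv))
      rw [Sym2.eq_iff] at he
      rcases he with ⟨rfl, rfl⟩ | ⟨rfl, rfl⟩
      · have hA : (To.deleteEdges {s(p,q)}).Reachable p p := Reachable.refl _
        simp [hcapo, hA, hbridge]
      · have hA : (To.deleteEdges {s(q,p)}).Reachable q q := Reachable.refl _
        have hsw : s(q, p) = s(p, q) := Sym2.eq_swap
        simp only [hcapo]
        rw [if_pos hsw]
        simp [hA, hbridge]
    · have hadj : (To.deleteEdges {s(u,v)}).Adj p q := by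
        rw [SimpleGraph.deleteEdges_adj]
        exact ⟨hTo0q, by simpa using (Ne.symm he)⟩
      have hiff : (To.deleteEdges {s(u,v)}).Reachable u p ↔
          (To.deleteEdges {s(u,v)}).Reachable u q :=
        ⟨fun h => h.trans hadj.reachable, fun h => h.trans hadj.reachable.symm⟩
      have : capo s(u, v) = 0 := by simp [hcapo, he]
      rw [this]
      by_cases hrp : (To.deleteEdges {s(u,v)}).Reachable u p
      · simp [hrp, hiff.mp hrp]
      · have hrq : ¬ (To.deleteEdges {s(u,v)}).Reachable u q := fun h => hrp (hiff.mpr h)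
        simp [hrp, hrq]
  · -- positivity of To sum
    have hsum : ∑ e ∈ To.edgeFinset, capo e ^ ((1:ℝ)/3) = 1 := by
      have heval : ∀ e ∈ To.edgeFinset, capo e ^ ((1:ℝ)/3)
          = if e = s(p,q) then (1:ℝ) else 0 := by
        intro e _
        by_cases h : e = s(p,q)
        · simp [hcapo, h, Real.one_rpow]
        · simp [hcapo, h, Real.zero_rpow (by norm_num : ((1:ℝ)/3) ≠ 0)]
      rw [Finset.sum_congr rfl heval,
        Finset.sum_ite_eq' To.edgeFinset s(p,q) (fun _ => (1:ℝ))]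
      have hmem : s(p,q) ∈ To.edgeFinset := SimpleGraph.mem_edgeFinset.mpr hTo0q
      rw [if_pos hmem]
    have := lt_of_lt_of_eq one_pos hsum.symm
    convert this using 4
    rfl
  · -- final inequality
    have h3 : ((1:ℝ)/3) ≠ 0 := by norm_num
    have hevalo : ∀ e : Sym2 (Fin n), capo e ^ ((1:ℝ)/3) = if e = s(p,q) then (1:ℝ) else 0 := by
      intro e
      by_cases h : e = s(p,q)
      · simp [hcapo, h, Real.one_rpow]
      · simp [hcapo, h, Real.zero_rpow h3]
    have hevals : ∀ e : Sym2 (Fin n), caps e ^ ((1:ℝ)/3) = 1 := by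
      intro e; simp [hcaps, Real.one_rpow]
    have hcard : ∀ (inst : Fintype Ts.edgeSet), (@SimpleGraph.edgeFinset _ Ts inst).card = m + 3 := by
      intro inst
      have h := @SimpleGraph.IsTree.card_edgeFinset (Fin n) Ts _ inst hTsTree
      rw [Fintype.card_fin] at h
      omega
    have hK' : K * 1 < ((m:ℝ) + 3) := by
      have := Nat.le_ceil K
      rw [← hm] at this
      linarith
    refine lt_of_eq_of_lt (congrArg (fun t : ℝ => K * t) ?_) (lt_of_lt_of_eq hK' ?_)
    · rw [Finset.sum_congr rfl (fun e _ => hevalo e), Finset.sum_ite_eq']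
      simp only [SimpleGraph.mem_edgeFinset]
      rw [if_pos ((SimpleGraph.mem_edgeSet To).mpr hTo0q)]
    · rw [Finset.sum_congr rfl (fun e _ => hevals e), Finset.sum_const, nsmul_eq_mul,
        mul_one, hcard _]
      push_cast; ring
end
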